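/- Let ((a_1, D_1),…,(a_n, D_n), B) be a base prophet instance: a_t ∈ [0,1]^d, B > 0, and V_1,…,V_n independent nonnegative integrable random variables with V_t distributed according to D_t, where each D_t is atomless. Let OPT_base := E[ max{ Σ_t V_t x_t : x ∈ {0,1}^n, Σ_t a_t x_t ≤ B·1 } ]. Then there exist measurable functions ψ_1,…,ψ_n from ℝ≥0 to {0,1} such that: (1) E[ Σ_t V_t·ψ_t(V_t) ] ≥ OPT_base/4, and (2) Σ_t a_t·E[ψ_t(V_t)] ≤ (B/4)·1 coordinatewise. -/

import Mathlib

open MeasureTheory Set Filter ProbabilityTheory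
open scoped Topology

lemma continuous_cdf_of_noAtoms (μ : Measure ℝ) [IsProbabilityMeasure μ] [NullSingletonClass μ] :
    Continuous (cdf μ) := by
  rw [continuous_iff_continuousAt]
  intro x
  rw [(monotone_cdf μ).continuousAt_iff_leftLim_eq_rightLim]
  have hr : Function.rightLim (cdf μ) x = cdf μ x := by
    apply rightLim_eq_of_tendsto
    exact ((cdf μ).right_continuous x).mono_left (nhdsWithin_mono _ Ioi_subset_Ici_self)
  have hsing : (cdf μ).measure {x} = 0 := by rw [measure_cdf]; exact measure_singleton x
  rw [StieltjesFunction.measure_singleton] at hsing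
  have h1 : cdf μ x - Function.leftLim (cdf μ) x ≤ 0 := by
    by_contra h
    push_neg at h
    simp [ENNReal.ofReal_eq_zero] at hsing
    linarith
  have h2 : Function.leftLim (cdf μ) x ≤ cdf μ x := (monotone_cdf μ).leftLim_le le_rfl
  rw [hr]
  linarith

lemma exists_threshold (μ : Measure ℝ) [IsProbabilityMeasure μ] [NullSingletonClass μ]
    {p lo : ℝ} (hp0 : 0 < p) (hlo : p ≤ (μ (Set.Ioi lo)).toReal) :
    ∃ τ, lo ≤ τ ∧ (μ (Set.Ioi τ)).toReal = p := by
  set g : ℝ → ℝ := fun τ => (μ (Set.Ioi τ)).toReal with hg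
  have hgc : Continuous g := by
    have h1 : ∀ τ, g τ = 1 - cdf μ τ := by
      intro τ
      have : Set.Ioi τ = (Set.Iic τ)ᶜ := by simp
      rw [hg]
      simp only [this, measure_compl measurableSet_Iic (measure_ne_top μ _), measure_univ]
      rw [ENNReal.toReal_sub_of_le (prob_le_one) (by simp), ENNReal.toReal_one,
        cdf_eq_real, measureReal_def]
    simp only [funext h1]
    exact continuous_const.sub (continuous_cdf_of_noAtoms μ)
  -- find M with g M ≤ p
  have htop : Tendsto g atTop (𝓝 0) := by
    have h1 : ∀ τ, g τ = 1 - cdf μ τ := by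
      intro τ
      have : Set.Ioi τ = (Set.Iic τ)ᶜ := by simp
      rw [hg]
      simp only [this, measure_compl measurableSet_Iic (measure_ne_top μ _), measure_univ]
      rw [ENNReal.toReal_sub_of_le (prob_le_one) (by simp), ENNReal.toReal_one,
        cdf_eq_real, measureReal_def]
    simp only [funext h1]
    have := tendsto_cdf_atTop μ
    have h2 := (tendsto_const_nhds (x := (1:ℝ)) (f := atTop)).sub this
    simpa using h2
  obtain ⟨M, hM⟩ : ∃ M, max lo 0 ≤ M ∧ g M ≤ p := by
    have := htop.eventually_le_const hp0
    rcases (this.and (eventually_ge_atTop (max lo 0))).exists with ⟨M, h1, h2⟩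
    exact ⟨M, h2, h1⟩
  have hloM : lo ≤ M := le_trans (le_max_left _ _) hM.1
  have := intermediate_value_Icc' hloM hgc.continuousOn (Set.mem_Icc.mpr ⟨hM.2, hlo⟩)
  obtain ⟨τ, hτ1, hτ2⟩ := this
  exact ⟨τ, hτ1.1, hτ2⟩

lemma map_eval_pi {n : ℕ} (D : Fin n → Measure ℝ) [∀ t, IsProbabilityMeasure (D t)] (t : Fin n) :
    (Measure.pi D).map (Function.eval t) = D t := by
  ext s hs
  rw [Measure.map_apply (measurable_pi_apply t) hs]
  have : Function.eval t ⁻¹' s = Set.pi Set.univ (Function.update (fun _ => (Set.univ : Set ℝ)) t s) := by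
    ext ω
    simp only [Set.mem_preimage, Set.mem_pi, Set.mem_univ, forall_true_left, Function.update_apply]
    constructor
    · intro h j; split <;> simp_all
    · intro h; have := h t; simpa using this
  rw [this, Measure.pi_pi]
  simp [Function.update_apply, apply_ite]

lemma key_chain {Ω : Type*} [MeasurableSpace Ω] (ν : Measure Ω) [IsProbabilityMeasure ν]
    (V : Ω → ℝ) (hVm : Measurable V) (hVi : Integrable V ν)
    (A : Set Ω) (hA : MeasurableSet A) {p τ τ' : ℝ} (hττ' : τ ≤ τ')
    (hp : (ν A).toReal = p)
    (h1 : (ν {ω | τ < V ω}).toReal = p)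
    (h2 : (ν {ω | τ' < V ω}).toReal = p / 4) :
    ∫ ω, A.indicator V ω ∂ν ≤ 4 * ∫ ω, ({ω | τ' < V ω}).indicator V ω ∂ν := by
  have hS1 : MeasurableSet {ω | τ < V ω} := measurableSet_lt measurable_const hVm
  have hS2 : MeasurableSet {ω | τ' < V ω} := measurableSet_lt measurable_const hVm
  set S1 := {ω | τ < V ω} with hS1def
  set S2 := {ω | τ' < V ω} with hS2def
  have iA : Integrable (A.indicator V) ν := hVi.indicator hA
  have i1 : Integrable (S1.indicator V) ν := hVi.indicator hS1
  have i2 : Integrable (S2.indicator V) ν := hVi.indicator hS2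
  have icA : Integrable (A.indicator (fun _ => τ)) ν := (integrable_const τ).indicator hA
  have ic1 : Integrable (S1.indicator (fun _ => τ)) ν := (integrable_const τ).indicator hS1
  have ic1' : Integrable (S1.indicator (fun _ => τ')) ν := (integrable_const τ').indicator hS1
  have ic2' : Integrable (S2.indicator (fun _ => τ')) ν := (integrable_const τ').indicator hS2
  -- step 1
  have step1 : ∫ ω, A.indicator V ω ∂ν ≤ ∫ ω, S1.indicator V ω ∂ν := by
    have pt : ∀ ω, A.indicator V ω - S1.indicator V ω ≤
        A.indicator (fun _ => τ) ω - S1.indicator (fun _ => τ) ω := by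
      intro ω
      by_cases h1' : ω ∈ A <;> by_cases h2' : ω ∈ S1
      · simp [Set.indicator_of_mem, h1', h2']
      · have hv : V ω ≤ τ := le_of_not_gt (by simpa [hS1def] using h2')
        simp only [Set.indicator_of_mem h1', Set.indicator_of_notMem h2']
        linarith
      · have hv : τ < V ω := by simpa [hS1def] using h2'
        simp only [Set.indicator_of_notMem h1', Set.indicator_of_mem h2']
        linarith
      · simp [Set.indicator_of_notMem, h1', h2']
    have := integral_mono (iA.sub i1) (icA.sub ic1) pt
    simp only [Pi.sub_apply] at this
    rw [integral_sub iA i1, integral_sub icA ic1, integral_indicator_const _ hA,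
      integral_indicator_const _ hS1] at this
    simp only [smul_eq_mul, measureReal_def, hp, h1] at this; linarith
  -- step 2
  have step2 : ∫ ω, S1.indicator V ω ∂ν ≤ ∫ ω, S2.indicator V ω ∂ν + (τ' * p - τ' * (p/4)) := by
    have pt : ∀ ω, S1.indicator V ω - S2.indicator V ω ≤
        S1.indicator (fun _ => τ') ω - S2.indicator (fun _ => τ') ω := by
      intro ω
      by_cases h1' : ω ∈ S1 <;> by_cases h2' : ω ∈ S2
      · simp [Set.indicator_of_mem, h1', h2']
      · have hv : V ω ≤ τ' := le_of_not_gt (by simpa [hS2def] using h2')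
        simp only [Set.indicator_of_mem h1', Set.indicator_of_notMem h2']
        linarith
      · have hv : τ' < V ω := by simpa [hS2def] using h2'
        simp only [Set.indicator_of_notMem h1', Set.indicator_of_mem h2']
        linarith
      · simp [Set.indicator_of_notMem, h1', h2']
    have := integral_mono (i1.sub i2) (ic1'.sub ic2') pt
    simp only [Pi.sub_apply] at this
    rw [integral_sub i1 i2, integral_sub ic1' ic2', integral_indicator_const _ hS1,
      integral_indicator_const _ hS2] at this
    simp only [smul_eq_mul, measureReal_def, h1, h2] at this; linarith
  -- step 3
  have step3 : τ' * (p/4) ≤ ∫ ω, S2.indicator V ω ∂ν := by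
    have pt : ∀ ω, S2.indicator (fun _ => τ') ω ≤ S2.indicator V ω := by
      intro ω
      by_cases h2' : ω ∈ S2
      · have hv : τ' < V ω := by simpa [hS2def] using h2'
        simp only [Set.indicator_of_mem h2']
        linarith
      · simp [Set.indicator_of_notMem, h2']
    have := integral_mono ic2' i2 pt
    rwa [integral_indicator_const _ hS2, smul_eq_mul, measureReal_def, h2, mul_comm] at this
  linarith

section helper
variable {α : Type*} [Fintype α] [DecidableEq α] [Nonempty α]

noncomputable def pick (S : Finset α) (c : α → α → Bool) : α :=
  if h : (S.filter (fun y => ∀ z ∈ S, c z y = true)).Nonempty then h.choose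
  else Classical.arbitrary α

lemma pick_mem {S : Finset α} {c : α → α → Bool}
    (h : (S.filter (fun y => ∀ z ∈ S, c z y = true)).Nonempty) :
    pick S c ∈ S.filter (fun y => ∀ z ∈ S, c z y = true) := by
  rw [pick, dif_pos h]; exact h.choose_spec

variable {Ω : Type*} [MeasurableSpace Ω] [MeasurableSpace α]

lemma measurable_pick_comp (S : Finset α) (f : α → Ω → ℝ) (hf : ∀ x, Measurable (f x)) :
    Measurable (fun ω => pick S (fun y z => decide (f y ω ≤ f z ω))) := by
  have hcomp : Measurable (fun ω => (fun y z => decide (f y ω ≤ f z ω)) : Ω → α → α → Bool) := by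
    refine measurable_pi_lambda _ (fun y => measurable_pi_lambda _ (fun z => ?_))
    refine measurable_to_countable' (fun b => ?_)
    rcases b with _ | _
    · have : (fun ω => decide (f y ω ≤ f z ω)) ⁻¹' {false} = {ω | f z ω < f y ω} := by
        ext ω; simp [decide_eq_false_iff_not, not_le]
      rw [this]; exact measurableSet_lt (hf z) (hf y)
    · have : (fun ω => decide (f y ω ≤ f z ω)) ⁻¹' {true} = {ω | f y ω ≤ f z ω} := by
        ext ω; simp
      rw [this]; exact measurableSet_le (hf y) (hf z)
  exact (measurable_of_countable (pick S)).comp hcomp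
end helper

/-- Existence of a surrogate single-item-threshold solution for a base
prophet instance: measurable policies `ψ_t : ℝ → {0,1}` whose expected value is at least
`OPT_base/4` while the expected utilization is at most `(B/4)·1`. -/
theorem prophet_surrogate_exists
    (n d : ℕ) (a : Fin n → Fin d → ℝ) (ha : ∀ t i, a t i ∈ Set.Icc (0 : ℝ) 1)
    (B : ℝ) (hB : 0 < B)
    (D : Fin n → Measure ℝ)
    (hprob : ∀ t, IsProbabilityMeasure (D t))
    (hatomless : ∀ t, NoAtoms (D t))
    (hnonneg : ∀ t, D t (Set.Iio 0) = 0)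
    (hint : ∀ t, Integrable id (D t)) :
    ∃ ψ : Fin n → ℝ → Bool, (∀ t, Measurable (ψ t)) ∧
      (∫ ω, sSup {val : ℝ | ∃ x : Fin n → Bool,
            (∀ i, ∑ t, a t i * (if x t then (1 : ℝ) else 0) ≤ B) ∧
            val = ∑ t, ω t * (if x t then (1 : ℝ) else 0)} ∂(Measure.pi D)) / 4
          ≤ ∫ ω, ∑ t, ω t * (if ψ t (ω t) then (1 : ℝ) else 0) ∂(Measure.pi D) ∧
      ∀ i, ∑ t, a t i * (∫ ω, (if ψ t (ω t) then (1 : ℝ) else 0) ∂(Measure.pi D)) ≤ B / 4 := by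
  classical
  haveI := hprob
  haveI : ∀ t, NullSingletonClass (D t) := hatomless
  set μ := Measure.pi D with hμdef
  haveI : IsProbabilityMeasure μ := by rw [hμdef]; infer_instance
  set f : (Fin n → Bool) → (Fin n → ℝ) → ℝ :=
    fun x ω => ∑ t, ω t * (if x t then (1:ℝ) else 0) with hfdef
  have hfm : ∀ x, Measurable (f x) :=
    fun x => Finset.measurable_sum _ (fun t _ => (measurable_pi_apply t).mul measurable_const)
  set S : Finset (Fin n → Bool) :=
    Finset.univ.filter (fun x => ∀ i, ∑ t, a t i * (if x t then (1:ℝ) else 0) ≤ B) with hSdef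
  have hfalse : (fun _ => false) ∈ S := by
    simp only [hSdef, Finset.mem_filter, Finset.mem_univ, true_and]
    intro i; simp [hB.le]
  set F : (Fin n → ℝ) → (Fin n → Bool) :=
    fun ω => pick S (fun y z => decide (f y ω ≤ f z ω)) with hFdef
  have hT : ∀ ω, (S.filter (fun y => ∀ z ∈ S,
      (fun y z => decide (f y ω ≤ f z ω)) z y = true)).Nonempty := by
    intro ω
    obtain ⟨b, hbS, hb⟩ := S.exists_max_image (fun x => f x ω) ⟨_, hfalse⟩
    exact ⟨b, Finset.mem_filter.mpr ⟨hbS, fun z hz => decide_eq_true (hb z hz)⟩⟩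
  have hFmem : ∀ ω, F ω ∈ S := fun ω => (Finset.mem_filter.mp (pick_mem (hT ω))).1
  have hFmax : ∀ ω, ∀ z ∈ S, f z ω ≤ f (F ω) ω := by
    intro ω z hz
    exact of_decide_eq_true ((Finset.mem_filter.mp (pick_mem (hT ω))).2 z hz)
  have hFm : Measurable F := measurable_pick_comp S f hfm
  -- the selected sets
  set A : Fin n → Set (Fin n → ℝ) := fun t => {ω | F ω t = true} with hAdef
  have hAmeas : ∀ t, MeasurableSet (A t) :=
    fun t => ((measurable_pi_apply t).comp hFm) (measurableSet_singleton true)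
  -- sSup identification
  have hsup : ∀ ω : Fin n → ℝ, sSup {val : ℝ | ∃ x : Fin n → Bool,
      (∀ i, ∑ t, a t i * (if x t then (1 : ℝ) else 0) ≤ B) ∧
      val = ∑ t, ω t * (if x t then (1 : ℝ) else 0)} = f (F ω) ω := by
    intro ω
    apply IsGreatest.csSup_eq
    constructor
    · refine ⟨F ω, ?_, rfl⟩
      have := hFmem ω
      rw [hSdef, Finset.mem_filter] at this
      exact this.2
    · rintro v ⟨x, hx, rfl⟩
      exact hFmax ω x (by rw [hSdef, Finset.mem_filter]; exact ⟨Finset.mem_univ _, hx⟩)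
  -- integrability of coordinates
  have hev : ∀ t, Integrable (fun ω : Fin n → ℝ => ω t) μ := by
    intro t
    have hmap : Integrable id (μ.map (Function.eval t)) := by
      rw [hμdef, map_eval_pi D t]; exact hint t
    have hm : AEMeasurable (Function.eval t : (Fin n → ℝ) → ℝ) μ :=
      (measurable_pi_apply t).aemeasurable
    have := (integrable_map_measure aestronglyMeasurable_id hm).mp hmap
    simpa [Function.comp, Function.eval] using this
  -- marginal measure of upper sets
  have hmeasIoi : ∀ (t : Fin n) (τ : ℝ), μ {ω | τ < ω t} = D t (Set.Ioi τ) := by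
    intro t τ
    rw [hμdef, ← map_eval_pi D t, Measure.map_apply (measurable_pi_apply t) measurableSet_Ioi]
    rfl
  have hIoi1 : ∀ t, ((D t) (Set.Ioi (-1:ℝ))).toReal = 1 := by
    intro t
    have h0 : D t (Set.Ici (0:ℝ)) = 1 := by
      rw [← Set.compl_Iio, measure_compl measurableSet_Iio (measure_ne_top _ _), hnonneg t]
      simp
    have : D t (Set.Ioi (-1:ℝ)) = 1 := le_antisymm prob_le_one (by
      calc (1:ENNReal) = D t (Set.Ici 0) := h0.symm
        _ ≤ D t (Set.Ioi (-1)) := measure_mono (fun x hx => lt_of_lt_of_le (by norm_num : (-1:ℝ) < 0) hx))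
    rw [this]; simp
  -- per-item surrogate policies
  have key : ∀ t : Fin n, ∃ g : ℝ → Bool, Measurable g ∧
      (∫ ω, (A t).indicator (fun ω => ω t) ω ∂μ
        ≤ 4 * ∫ ω, ω t * (if g (ω t) then (1:ℝ) else 0) ∂μ) ∧
      (∫ ω, (if g (ω t) then (1:ℝ) else 0) ∂μ = (μ (A t)).toReal / 4) := by
    intro t
    by_cases hp0 : (μ (A t)).toReal = 0
    · refine ⟨fun _ => false, measurable_const, ?_, ?_⟩
      · have hnull : μ (A t) = 0 :=
          ((ENNReal.toReal_eq_zero_iff _).mp hp0).resolve_right (measure_ne_top μ _)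
        rw [integral_indicator (hAmeas t)]
        have : μ.restrict (A t) = 0 := Measure.restrict_eq_zero.mpr hnull
        rw [this]
        simp
      · simp [hp0]
    · set p := (μ (A t)).toReal with hpdef
      have hppos : 0 < p := lt_of_le_of_ne ENNReal.toReal_nonneg (Ne.symm hp0)
      obtain ⟨τ, hτlo, hτ⟩ := exists_threshold (D t) hppos
        (by rw [hIoi1 t]; exact (ENNReal.toReal_le_of_le_ofReal zero_le_one (by
          simpa using prob_le_one)).trans_eq rfl)
      obtain ⟨τ', hττ', hτ'⟩ := exists_threshold (D t) (by linarith : (0:ℝ) < p/4)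
        (by rw [hτ]; linarith)
      refine ⟨fun v => decide (τ' < v), ?_, ?_, ?_⟩
      · refine measurable_to_countable' (fun b => ?_)
        rcases b with _ | _
        · have : (fun v => decide (τ' < v)) ⁻¹' {false} = Set.Iic τ' := by
            ext v; simp [decide_eq_false_iff_not, not_lt]
          rw [this]; exact measurableSet_Iic
        · have : (fun v => decide (τ' < v)) ⁻¹' {true} = Set.Ioi τ' := by
            ext v; simp [Set.mem_Ioi]
          rw [this]; exact measurableSet_Ioi
      · have hchain := key_chain μ (fun ω => ω t) (measurable_pi_apply t) (hev t)
          (A t) (hAmeas t) hττ' hpdef.symm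
          (by rw [hmeasIoi t τ, hτ]) (by rw [hmeasIoi t τ', hτ'])
        have heq : ∀ ω : Fin n → ℝ, ({ω : Fin n → ℝ | τ' < ω t}).indicator (fun ω => ω t) ω
            = ω t * (if decide (τ' < ω t) then (1:ℝ) else 0) := by
          intro ω
          by_cases h : τ' < ω t <;> simp [Set.indicator, h]
        calc ∫ ω, (A t).indicator (fun ω => ω t) ω ∂μ
            ≤ 4 * ∫ ω, ({ω : Fin n → ℝ | τ' < ω t}).indicator (fun ω => ω t) ω ∂μ := hchain
          _ = 4 * ∫ ω, ω t * (if decide (τ' < ω t) then (1:ℝ) else 0) ∂μ := by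
              rw [integral_congr_ae (Filter.Eventually.of_forall heq)]
      · have hset : MeasurableSet {ω : Fin n → ℝ | τ' < ω t} :=
          measurableSet_lt measurable_const (measurable_pi_apply t)
        have heq : ∀ ω : Fin n → ℝ, (if decide (τ' < ω t) then (1:ℝ) else 0)
            = ({ω : Fin n → ℝ | τ' < ω t}).indicator (fun _ => (1:ℝ)) ω := by
          intro ω; by_cases h : τ' < ω t <;> simp [Set.indicator, h]
        rw [integral_congr_ae (Filter.Eventually.of_forall heq),
          integral_indicator_const _ hset, measureReal_def, hmeasIoi t τ', hτ']
        simp [hpdef]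
  choose g hgm hgval hgbud using key
  -- feasibility of expected selection
  have hfeas : ∀ i, ∑ t, a t i * (μ (A t)).toReal ≤ B := by
    intro i
    have hindint : ∀ t : Fin n, Integrable (fun ω => a t i * (A t).indicator (fun _ => (1:ℝ)) ω) μ :=
      fun t => (((integrable_const (1:ℝ)).indicator (hAmeas t))).const_mul _
    have h1 : ∑ t, a t i * (μ (A t)).toReal
        = ∫ ω, ∑ t, a t i * (A t).indicator (fun _ => (1:ℝ)) ω ∂μ := by
      rw [integral_finset_sum _ (fun t _ => hindint t)]
      refine Finset.sum_congr rfl (fun t _ => ?_)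
      rw [integral_const_mul, integral_indicator_const _ (hAmeas t)]
      simp [measureReal_def]
    rw [h1]
    have h2 : ∀ ω : Fin n → ℝ, ∑ t, a t i * (A t).indicator (fun _ => (1:ℝ)) ω ≤ B := by
      intro ω
      have hmem := hFmem ω
      rw [hSdef, Finset.mem_filter] at hmem
      refine le_trans (le_of_eq ?_) (hmem.2 i)
      refine Finset.sum_congr rfl (fun t _ => ?_)
      by_cases h : F ω t = true
      · simp [Set.indicator, hAdef, h]
      · simp only [Bool.not_eq_true] at h
        simp [Set.indicator, hAdef, h]
    calc ∫ ω, ∑ t, a t i * (A t).indicator (fun _ => (1:ℝ)) ω ∂μ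
        ≤ ∫ _, B ∂μ := integral_mono (integrable_finset_sum _ (fun t _ => hindint t))
          (integrable_const B) h2
      _ = B := by simp
  -- integrability of the policy-value integrands
  have ival : ∀ t : Fin n, Integrable (fun ω : Fin n → ℝ => ω t * (if g t (ω t) then (1:ℝ) else 0)) μ := by
    intro t
    have hm : Measurable (fun ω : Fin n → ℝ => (if g t (ω t) then (1:ℝ) else 0)) := by
      have : (fun ω : Fin n → ℝ => (if g t (ω t) then (1:ℝ) else 0))
          = (fun b => if b then (1:ℝ) else 0) ∘ g t ∘ (fun ω => ω t) := rfl
      rw [this]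
      exact (measurable_of_countable _).comp ((hgm t).comp (measurable_pi_apply t))
    refine (hev t).mono ((measurable_pi_apply t).mul hm).aestronglyMeasurable
      (Filter.Eventually.of_forall (fun ω => ?_))
    by_cases h : g t (ω t) <;> simp [h, abs_nonneg]
  refine ⟨g, hgm, ?_, ?_⟩
  · -- value bound
    have hOPT : ∫ ω, sSup {val : ℝ | ∃ x : Fin n → Bool,
        (∀ i, ∑ t, a t i * (if x t then (1 : ℝ) else 0) ≤ B) ∧
        val = ∑ t, ω t * (if x t then (1 : ℝ) else 0)} ∂μ
        = ∑ t, ∫ ω, (A t).indicator (fun ω => ω t) ω ∂μ := by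
      rw [integral_congr_ae (Filter.Eventually.of_forall hsup)]
      have heq : ∀ ω, f (F ω) ω = ∑ t, (A t).indicator (fun ω => ω t) ω := by
        intro ω
        refine Finset.sum_congr rfl (fun t _ => ?_)
        by_cases h : F ω t = true
        · simp [Set.indicator, hAdef, h]
        · simp only [Bool.not_eq_true] at h
          simp [Set.indicator, hAdef, h]
      rw [integral_congr_ae (Filter.Eventually.of_forall heq)]
      exact integral_finset_sum _ (fun t _ => (hev t).indicator (hAmeas t))
    rw [hOPT, div_le_iff₀ (by norm_num : (0:ℝ) < 4)]
    rw [integral_finset_sum _ (fun t _ => ival t), Finset.sum_mul]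
    refine Finset.sum_le_sum (fun t _ => ?_)
    calc ∫ ω, (A t).indicator (fun ω => ω t) ω ∂μ
        ≤ 4 * ∫ ω, ω t * (if g t (ω t) then (1:ℝ) else 0) ∂μ := hgval t
      _ = (∫ ω, ω t * (if g t (ω t) then (1:ℝ) else 0) ∂μ) * 4 := by ring
  · -- budget bound
    intro i
    have : ∑ t, a t i * (∫ ω, (if g t (ω t) then (1:ℝ) else 0) ∂μ)
        = (∑ t, a t i * (μ (A t)).toReal) / 4 := by
      rw [Finset.sum_div]
      refine Finset.sum_congr rfl (fun t _ => ?_)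
      rw [hgbud t]; ring
    rw [this]
    have := hfeas i
    linarith
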